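/- Let F be an invertible 3×3 matrix with positive determinant and τ a symmetric 3×3 matrix. Then ‖dev₃(Fᵀ τ F⁻ᵀ)‖ ≥ (1/√2)‖dev₃ τ‖. -/
import Mathlib


open Matrix

/-- Deviatoric part: dev₃ X = X − (1/3) tr(X)·𝟙. -/
noncomputable def dev3 (X : Matrix (Fin 3) (Fin 3) ℝ) : Matrix (Fin 3) (Fin 3) ℝ :=
  X - (X.trace / 3) • (1 : Matrix (Fin 3) (Fin 3) ℝ)

/-- Frobenius norm ‖X‖ = √tr(Xᵀ X). -/
noncomputable def fnorm (X : Matrix (Fin 3) (Fin 3) ℝ) : ℝ := Real.sqrt (Xᵀ * X).trace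

/-- For `F` with positive determinant and symmetric `τ`:
‖dev₃(Fᵀ τ F⁻ᵀ)‖ ≥ (1/√2)‖dev₃ τ‖. -/
theorem fnorm_dev3_conj_ge (F τ : Matrix (Fin 3) (Fin 3) ℝ)
    (hF : 0 < F.det) (hτ : τᵀ = τ) :
    fnorm (dev3 (Fᵀ * τ * (F⁻¹)ᵀ)) ≥ (1 / Real.sqrt 2) * fnorm (dev3 τ) := by
  have hu : IsUnit F.det := isUnit_iff_ne_zero.mpr (ne_of_gt hF)
  have hFinv : F * F⁻¹ = 1 := Matrix.mul_nonsing_inv F hu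
  have hinvF : F⁻¹ * F = 1 := Matrix.nonsing_inv_mul F hu
  set S := dev3 τ with hS
  have hSsym : Sᵀ = S := by
    simp [hS, dev3, transpose_sub, transpose_smul, hτ]
  set B := Fᵀ * S * (F⁻¹)ᵀ with hB
  -- dev3 commutes with the conjugation
  have hdev : dev3 (Fᵀ * τ * (F⁻¹)ᵀ) = B := by
    have htr : (Fᵀ * τ * (F⁻¹)ᵀ).trace = τ.trace := by
      rw [Matrix.trace_mul_comm, ← Matrix.mul_assoc, ← Matrix.transpose_mul, hFinv]
      simp
    simp only [hB, hS, dev3, htr]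
    rw [Matrix.mul_sub, Matrix.sub_mul]
    congr 1
    rw [Matrix.mul_smul, Matrix.smul_mul, Matrix.mul_one, ← Matrix.transpose_mul, hinvF]
    simp
  -- trace of B*B equals trace of Sᵀ*S
  have hBB : (B * B).trace = (Sᵀ * S).trace := by
    have h1 : B * B = Fᵀ * (S * S) * (F⁻¹)ᵀ := by
      rw [hB]
      have h2 : (F⁻¹)ᵀ * Fᵀ = 1 := by rw [← Matrix.transpose_mul, hFinv]; simp
      calc Fᵀ * S * (F⁻¹)ᵀ * (Fᵀ * S * (F⁻¹)ᵀ)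
          = Fᵀ * S * ((F⁻¹)ᵀ * Fᵀ) * S * (F⁻¹)ᵀ := by
            simp only [Matrix.mul_assoc]
        _ = Fᵀ * (S * S) * (F⁻¹)ᵀ := by rw [h2]; simp [Matrix.mul_assoc]
    rw [h1, Matrix.trace_mul_comm, ← Matrix.mul_assoc, ← Matrix.transpose_mul, hFinv, hSsym]
    simp
  -- Cauchy-Schwarz: trace(B*B) ≤ trace(Bᵀ*B)
  have hbnn : 0 ≤ (Bᵀ * B).trace := by
    rw [Matrix.trace]
    apply Finset.sum_nonneg
    intro i _
    rw [Matrix.diag_apply, Matrix.mul_apply]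
    apply Finset.sum_nonneg
    intro k _
    rw [Matrix.transpose_apply]
    exact mul_self_nonneg _
  have hCS : (B * B).trace ≤ (Bᵀ * B).trace := by
    have ha : (B * B).trace = ∑ p : Fin 3 × Fin 3, B p.1 p.2 * B p.2 p.1 := by
      simp [Matrix.trace, Matrix.diag_apply, Matrix.mul_apply, Fintype.sum_prod_type]
    have hb : (Bᵀ * B).trace = ∑ p : Fin 3 × Fin 3, (B p.1 p.2) ^ 2 := by
      rw [Fintype.sum_prod_type, Finset.sum_comm]
      simp [Matrix.trace, Matrix.diag_apply, Matrix.mul_apply, Matrix.transpose_apply, sq]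
    have hswap : ∑ p : Fin 3 × Fin 3, (B p.2 p.1) ^ 2
        = ∑ p : Fin 3 × Fin 3, (B p.1 p.2) ^ 2 := by
      exact Fintype.sum_equiv (Equiv.prodComm _ _) _ _ (fun p => rfl)
    have hsq : ((B * B).trace) ^ 2 ≤ ((Bᵀ * B).trace) ^ 2 := by
      rw [ha, hb]
      calc (∑ p : Fin 3 × Fin 3, B p.1 p.2 * B p.2 p.1) ^ 2
          ≤ (∑ p : Fin 3 × Fin 3, (B p.1 p.2) ^ 2) *
            (∑ p : Fin 3 × Fin 3, (B p.2 p.1) ^ 2) :=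
            Finset.sum_mul_sq_le_sq_mul_sq _ _ _
        _ = (∑ p : Fin 3 × Fin 3, (B p.1 p.2) ^ 2) ^ 2 := by rw [hswap, sq]
    calc (B * B).trace ≤ |(B * B).trace| := le_abs_self _
      _ = Real.sqrt (((B * B).trace) ^ 2) := (Real.sqrt_sq_eq_abs _).symm
      _ ≤ Real.sqrt (((Bᵀ * B).trace) ^ 2) := Real.sqrt_le_sqrt hsq
      _ = |(Bᵀ * B).trace| := Real.sqrt_sq_eq_abs _
      _ = (Bᵀ * B).trace := abs_of_nonneg hbnn
  have hmain : (Sᵀ * S).trace ≤ (Bᵀ * B).trace := hBB ▸ hCS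
  have hfn : fnorm S ≤ fnorm B := Real.sqrt_le_sqrt hmain
  have hfnS : 0 ≤ fnorm S := Real.sqrt_nonneg _
  have hcoef : (1 / Real.sqrt 2) ≤ 1 := by
    rw [div_le_one (by positivity)]
    nlinarith [Real.sq_sqrt (by norm_num : (2:ℝ) ≥ 0), Real.sqrt_nonneg 2]
  rw [hdev]
  calc (1 / Real.sqrt 2) * fnorm S ≤ 1 * fnorm S :=
        mul_le_mul_of_nonneg_right hcoef hfnS
    _ = fnorm S := one_mul _
    _ ≤ fnorm B := hfn
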